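/- Let B be an N × N real symmetric matrix with diagonal entries 1 and off-diagonal entries of absolute value at most ε, where 1/√N ≤ ε ≤ 1/100, and let D' = rank(B). Then D' ≥ (r/5)·(1/ε)^{2r/(r+1)}, where r = (log₂ N)/(2 log₂(1/ε)). -/

import Mathlib

open Matrix Finset Module

lemma sq_trace_le_rank_mul (n : ℕ) (A : Matrix (Fin n) (Fin n) ℝ) (hA : A.IsHermitian) :
    A.trace ^ 2 ≤ (A.rank : ℝ) * (A * A).trace := by
  classical
  set μ := hA.eigenvalues with hμ
  set U := (hA.eigenvectorUnitary : Matrix (Fin n) (Fin n) ℝ) with hU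
  have hUU : star U * U = 1 := mem_unitaryGroup_iff'.mp hA.eigenvectorUnitary.2
  have hdiag : A = U * Matrix.diagonal μ * star U := by
    have := hA.spectral_theorem
    simpa [RCLike.ofReal_real_eq_id] using this
  have htr : A.trace = ∑ i, μ i := by
    rw [hdiag, Matrix.trace_mul_cycle, hUU, Matrix.one_mul, Matrix.trace_diagonal]
  have htr2 : (A * A).trace = ∑ i, μ i ^ 2 := by
    have : A * A = U * (Matrix.diagonal μ * Matrix.diagonal μ) * star U := by
      rw [hdiag]
      have h5 : star U * (U * Matrix.diagonal μ * star U) = Matrix.diagonal μ * star U := by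
        rw [← Matrix.mul_assoc, ← Matrix.mul_assoc, hUU, Matrix.one_mul]
      rw [Matrix.mul_assoc (U * Matrix.diagonal μ) (star U), h5, ← Matrix.mul_assoc,
        Matrix.mul_assoc U]
    rw [this, Matrix.trace_mul_cycle, hUU, Matrix.one_mul,
      Matrix.diagonal_mul_diagonal, Matrix.trace_diagonal]
    simp [sq]
  have hrank : (A.rank : ℕ) = Fintype.card {i // μ i ≠ 0} := hA.rank_eq_card_non_zero_eigs
  set s : Finset (Fin n) := Finset.univ.filter (fun i => μ i ≠ 0) with hs
  have hcard : (s.card : ℕ) = A.rank := by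
    rw [hrank, Fintype.card_subtype]
  have h1 : ∑ i, μ i = ∑ i ∈ s, μ i := by
    rw [hs]
    exact (Finset.sum_filter_ne_zero _).symm
  have h2 : (∑ i ∈ s, μ i) ^ 2 ≤ (s.card : ℝ) * ∑ i ∈ s, μ i ^ 2 :=
    sq_sum_le_card_mul_sum_sq
  have h3 : ∑ i ∈ s, μ i ^ 2 ≤ ∑ i, μ i ^ 2 := by
    apply Finset.sum_le_sum_of_subset_of_nonneg (Finset.subset_univ s)
    intro i _ _
    positivity
  calc A.trace ^ 2 = (∑ i ∈ s, μ i) ^ 2 := by rw [htr, h1]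
    _ ≤ (s.card : ℝ) * ∑ i ∈ s, μ i ^ 2 := h2
    _ ≤ (s.card : ℝ) * ∑ i, μ i ^ 2 := by
        apply mul_le_mul_of_nonneg_left h3 (Nat.cast_nonneg _)
    _ = (A.rank : ℝ) * (A * A).trace := by rw [htr2, ← hcard]

lemma rank_entrywise_pow_le {N : ℕ} (B : Matrix (Fin N) (Fin N) ℝ) (k : ℕ) :
    (Matrix.of fun i j => B i j ^ k).rank ≤ (B.rank + k - 1).choose k := by
  classical
  set A : Matrix (Fin N) (Fin N) ℝ := Matrix.of fun i j => B i j ^ k with hA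
  set W : Submodule ℝ (Fin N → ℝ) := Submodule.span ℝ (Set.range Bᵀ) with hW
  have hfin : Module.finrank ℝ W = B.rank := (B.rank_eq_finrank_span_cols).symm
  set ι := Fin (Module.finrank ℝ W) with hι
  let b : Basis ι ℝ W := Module.finBasis ℝ W
  let c : ι → (Fin N → ℝ) := fun t => ((b t : W) : Fin N → ℝ)
  have hmem : ∀ j, Bᵀ j ∈ W := fun j => Submodule.subset_span (Set.mem_range_self j)
  let α : ι → Fin N → ℝ := fun t j => b.repr ⟨Bᵀ j, hmem j⟩ t
  have hBrep : ∀ i j, B i j = ∑ t, α t j * c t i := by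
    intro i j
    have h1 := b.sum_repr ⟨Bᵀ j, hmem j⟩
    have h2 := congrArg (fun (w : W) => (w : Fin N → ℝ) i) h1
    simp only [Submodule.coe_sum, Submodule.coe_smul, Finset.sum_apply, Pi.smul_apply,
      smul_eq_mul] at h2
    exact h2.symm
  let v : Sym ι k → (Fin N → ℝ) := fun m => fun i => (m.val.map fun t => c t i).prod
  have hcol : ∀ j, Aᵀ j ∈ Submodule.span ℝ (Set.range v) := by
    intro j
    have hAj : Aᵀ j = ∑ g ∈ Fintype.piFinset (fun _ : Fin k => (Finset.univ : Finset ι)),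
        (∏ s, α (g s) j) • v ⟨(List.ofFn g : Multiset ι), by simp⟩ := by
      funext i
      have h0 : Aᵀ j i = (∑ t, α t j * c t i) ^ k := by
        simp only [hA, Matrix.transpose_apply, Matrix.of_apply]
        rw [hBrep i j]
      rw [h0, Finset.sum_pow', Finset.sum_apply]
      apply Finset.sum_congr rfl
      intro g _
      rw [Pi.smul_apply, smul_eq_mul]
      have hv : v ⟨(List.ofFn g : Multiset ι), by simp⟩ i = ∏ s, c (g s) i := by
        simp [v, List.map_ofFn, List.prod_ofFn, Function.comp]
      rw [hv, ← Finset.prod_mul_distrib]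
    rw [hAj]
    exact Submodule.sum_mem _ fun g _ =>
      Submodule.smul_mem _ _ (Submodule.subset_span (Set.mem_range_self _))
  have hle : Submodule.span ℝ (Set.range Aᵀ) ≤ Submodule.span ℝ (Set.range v) :=
    Submodule.span_le.mpr (by rintro x ⟨j, rfl⟩; exact hcol j)
  calc A.rank = finrank ℝ (Submodule.span ℝ (Set.range Aᵀ)) := A.rank_eq_finrank_span_cols
    _ ≤ finrank ℝ (Submodule.span ℝ (Set.range v)) := Submodule.finrank_mono hle
    _ ≤ Fintype.card (Sym ι k) := finrank_range_le_card v
    _ = (B.rank + k - 1).choose k := by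
        rw [Sym.card_sym_eq_choose, Fintype.card_fin, hfin]

lemma final_arith (e s P r kk D : ℝ) (he : 0 < e) (heLt : e ≤ 2.7182818286)
    (hs : 0 < s) (hs2 : s ≤ 1.41422) (hP : 100 ≤ P) (hr : 1 ≤ r) (hrk : r ≤ kk)
    (hkr : kk ≤ r + 1) (hD : 0 ≤ D) (hmain : kk * (P / s) ≤ e * (D + kk - 1)) :
    r / 5 * P ≤ D := by
  have hP0 : 0 < P := by linarith
  have h1 : r * (P / s) ≤ kk * (P / s) :=
    mul_le_mul_of_nonneg_right hrk (by positivity)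
  have h2 : e * (D + kk - 1) ≤ e * (D + r) := by
    apply mul_le_mul_of_nonneg_left _ he.le
    linarith
  have h3 : r * (P / s) ≤ e * (D + r) := le_trans h1 (le_trans hmain h2)
  have h4 : r * P ≤ e * s * (D + r) := by
    have h5 := mul_le_mul_of_nonneg_right h3 hs.le
    calc r * P = r * (P / s) * s := by field_simp
      _ ≤ e * (D + r) * s := h5
      _ = e * s * (D + r) := by ring
  have hes : e * s ≤ 3.85 := by nlinarith
  have h5 : r * P ≤ 3.85 * (D + r) :=
    le_trans h4 (mul_le_mul_of_nonneg_right hes (by linarith))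
  have h6 : 100 * r ≤ r * P := by nlinarith
  linarith

set_option maxHeartbeats 1600000 in
theorem alon_rank_lower_bound (N : ℕ) (B : Matrix (Fin N) (Fin N) ℝ) (ε : ℝ)
    (hsym : B.IsSymm) (hdiag : ∀ i, B i i = 1)
    (hoff : ∀ i j, i ≠ j → |B i j| ≤ ε)
    (hε1 : 1 / Real.sqrt N ≤ ε) (hε2 : ε ≤ 1 / 100) :
    (Real.logb 2 N / (2 * Real.logb 2 (1 / ε)) / 5) *
        (1 / ε) ^ (2 * (Real.logb 2 N / (2 * Real.logb 2 (1 / ε))) /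
          (Real.logb 2 N / (2 * Real.logb 2 (1 / ε)) + 1))
      ≤ (B.rank : ℝ) := by
  classical
  rcases Nat.eq_zero_or_pos N with hN0 | hNpos
  · subst hN0
    simp only [Nat.cast_zero, Real.logb_zero, zero_div, zero_mul]
    positivity
  -- Main case
  have hN1 : (1:ℝ) ≤ (N:ℝ) := by exact_mod_cast hNpos
  have hsqN : 0 < Real.sqrt N := Real.sqrt_pos.mpr (by positivity)
  have hε0 : 0 < ε := lt_of_lt_of_le (by positivity) hε1
  set x : ℝ := 1 / ε with hxdef
  have hx100 : (100:ℝ) ≤ x := by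
    rw [hxdef, le_div_iff₀ hε0]; linarith
  have hx1 : (1:ℝ) < x := by linarith
  have hx0 : (0:ℝ) < x := by linarith
  have hxsqrt : x ≤ Real.sqrt N := by
    rw [hxdef, div_le_iff₀ hε0]
    rw [div_le_iff₀ hsqN] at hε1
    linarith
  have hNx : x ^ (2:ℕ) ≤ (N:ℝ) := by
    calc x ^ (2:ℕ) ≤ Real.sqrt N ^ (2:ℕ) := by
          apply pow_le_pow_left₀ (le_of_lt hx0) hxsqrt
      _ = (N:ℝ) := Real.sq_sqrt (by positivity)
  set L : ℝ := Real.logb 2 x with hLdef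
  have hLpos : 0 < L := Real.logb_pos one_lt_two hx1
  set r : ℝ := Real.logb 2 (N:ℝ) / (2 * L) with hrdef
  have hNpos' : (0:ℝ) < (N:ℝ) := by positivity
  have hxN : x ^ (2*r) = (N:ℝ) := by
    have h2 : (2:ℝ) ^ L = x := Real.rpow_logb two_pos (by norm_num) hx0
    rw [← h2, ← Real.rpow_mul (by norm_num : (0:ℝ) ≤ 2)]
    have : L * (2 * r) = Real.logb 2 (N:ℝ) := by
      rw [hrdef]; field_simp
    rw [this]
    exact Real.rpow_logb two_pos (by norm_num) hNpos'
  have hr1 : 1 ≤ r := by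
    rw [hrdef, le_div_iff₀ (by positivity)]
    have h1 : (1:ℝ) * (2 * L) = Real.logb 2 (x ^ (2:ℕ)) := by
      rw [Real.logb_pow]; push_cast; ring
    rw [h1]
    exact Real.logb_le_logb_of_le one_lt_two (by positivity) hNx
  set k : ℕ := ⌈r⌉₊ with hkdef
  have hk1 : 1 ≤ k := Nat.one_le_iff_ne_zero.mpr (by
    simp only [hkdef, ne_eq, Nat.ceil_eq_zero, not_le]; linarith)
  have hrk : r ≤ (k:ℝ) := Nat.le_ceil r
  have hkr : (k:ℝ) ≤ r + 1 := (Nat.ceil_lt_add_one (by linarith)).le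
  have hk0 : (0:ℝ) < (k:ℝ) := by exact_mod_cast hk1
  -- the entrywise power matrix
  set A : Matrix (Fin N) (Fin N) ℝ := Matrix.of fun i j => B i j ^ k with hAdef
  have hBsymm : ∀ i j, B j i = B i j := by
    intro i j
    have := congrFun (congrFun hsym j) i
    simpa [Matrix.transpose_apply] using this.symm
  have hAH : A.IsHermitian := by
    rw [Matrix.IsHermitian, Matrix.conjTranspose_eq_transpose_of_trivial]
    ext i j
    simp only [Matrix.transpose_apply, hAdef, Matrix.of_apply]
    rw [hBsymm i j]
  have htrA : A.trace = (N:ℝ) := by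
    simp [Matrix.trace, Matrix.diag, hAdef, hdiag]
  have hεx : ε = 1 / x := by rw [hxdef]; field_simp
  have hεk : ε ^ (2*k) ≤ 1 / (N:ℝ) := by
    have hxk : (N:ℝ) ≤ x ^ (2*k : ℕ) := by
      rw [← Real.rpow_natCast x (2*k), ← hxN]
      apply Real.rpow_le_rpow_of_exponent_le hx1.le
      push_cast
      nlinarith
    have h1 : ε ^ (2*k) = 1 / x ^ (2*k : ℕ) := by
      rw [hεx, div_pow, one_pow]
    rw [h1]
    apply one_div_le_one_div_of_le hNpos' hxk
  have htrAA : (A * A).trace ≤ 2 * (N:ℝ) := by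
    have h1 : (A * A).trace = ∑ i, ∑ j, A i j * A j i := by
      simp [Matrix.trace, Matrix.diag, Matrix.mul_apply]
    rw [h1]
    have hbd : ∀ i : Fin N, ∑ j, A i j * A j i ≤ 2 := by
      intro i
      have step1 : ∑ j, A i j * A j i ≤ ∑ j : Fin N, (1/(N:ℝ) + if i = j then 1 else 0) := by
        apply Finset.sum_le_sum
        intro j _
        by_cases hij : i = j
        · subst hij
          rw [if_pos rfl]
          simp only [hAdef, Matrix.of_apply, hdiag, one_pow, one_mul]
          have : (0:ℝ) < 1/(N:ℝ) := by positivity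
          linarith
        · simp only [if_neg hij, add_zero]
          have habs := hoff i j hij
          have hBji : A i j * A j i = (B i j ^ 2) ^ k := by
            simp only [hAdef, Matrix.of_apply]
            rw [hBsymm i j]
            rw [← pow_mul, ← pow_add]
            ring_nf
          rw [hBji]
          have h2 : B i j ^ 2 ≤ ε ^ 2 := sq_le_sq' (by linarith [abs_le.mp habs |>.1])
            (abs_le.mp habs |>.2)
          calc (B i j ^ 2) ^ k ≤ (ε ^ 2) ^ k := by
                apply pow_le_pow_left₀ (sq_nonneg _) h2
            _ = ε ^ (2*k) := by rw [← pow_mul]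
            _ ≤ 1/(N:ℝ) := hεk
      have step2 : ∑ j : Fin N, (1/(N:ℝ) + if i = j then 1 else 0) = 2 := by
        rw [Finset.sum_add_distrib, Finset.sum_const, Finset.sum_ite_eq]
        simp only [Finset.mem_univ, if_pos, Finset.card_univ, Fintype.card_fin, nsmul_eq_mul]
        field_simp
        norm_num
      linarith [step1, step2.le, step2.ge]
    calc ∑ i, ∑ j, A i j * A j i ≤ ∑ _i : Fin N, (2:ℝ) := Finset.sum_le_sum fun i _ => hbd i
      _ = 2 * (N:ℝ) := by simp [mul_comm]
  -- N/2 ≤ rank A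
  have hrankA : (N:ℝ) ≤ 2 * (A.rank : ℝ) := by
    have h := sq_trace_le_rank_mul N A hAH
    rw [htrA] at h
    have h2 : (A.rank : ℝ) * (A * A).trace ≤ (A.rank : ℝ) * (2 * (N:ℝ)) :=
      mul_le_mul_of_nonneg_left htrAA (by positivity)
    nlinarith
  set D : ℕ := B.rank with hDdef
  have hDk : A.rank ≤ (D + k - 1).choose k := rank_entrywise_pow_le B k
  set n : ℕ := D + k - 1 with hndef
  have hn : (n:ℝ) = (D:ℝ) + (k:ℝ) - 1 := by
    have : n = D + (k - 1) := by omega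
    rw [this, Nat.cast_add, Nat.cast_sub hk1]
    push_cast
    ring
  -- choose bound
  have hkfac : (0:ℝ) < (Nat.factorial k : ℝ) := by exact_mod_cast k.factorial_pos
  have hfact : ((k:ℝ))^k ≤ Real.exp 1 ^ k * (Nat.factorial k : ℝ) := by
    have hsum := Real.sum_le_exp_of_nonneg (x := (k:ℝ)) (by positivity) (k+1)
    have hterm : ((k:ℝ))^k / (Nat.factorial k : ℝ) ≤ Real.exp (k:ℝ) := by
      refine le_trans ?_ hsum
      exact Finset.single_le_sum (f := fun i => ((k:ℝ))^i / (Nat.factorial i : ℝ))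
        (fun i _ => by positivity) (Finset.self_mem_range_succ k)
    rw [div_le_iff₀ hkfac] at hterm
    have hexp : Real.exp (k:ℝ) = Real.exp 1 ^ k := by
      rw [← Real.exp_nat_mul]; norm_num
    rw [hexp] at hterm
    linarith
  have hc2 : ((n.choose k : ℕ) : ℝ) ≤ (Real.exp 1 * (n:ℝ) / (k:ℝ)) ^ k := by
    have h1 : ((n.choose k : ℕ) : ℝ) ≤ ((n:ℝ))^k / (Nat.factorial k : ℝ) :=
      Nat.choose_le_pow_div k n
    refine le_trans h1 ?_
    rw [div_pow, mul_pow, div_le_div_iff₀ hkfac (by positivity)]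
    have hnn : (0:ℝ) ≤ ((n:ℝ))^k := by positivity
    calc ((n:ℝ))^k * ((k:ℝ))^k ≤ ((n:ℝ))^k * (Real.exp 1 ^ k * (Nat.factorial k : ℝ)) := by
          apply mul_le_mul_of_nonneg_left hfact hnn
      _ = Real.exp 1 ^ k * ((n:ℝ))^k * (Nat.factorial k : ℝ) := by ring
  have hNc : (N:ℝ)/2 ≤ (Real.exp 1 * (n:ℝ) / (k:ℝ)) ^ k := by
    have hcast : (A.rank : ℝ) ≤ ((n.choose k : ℕ) : ℝ) := by exact_mod_cast hDk
    linarith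
  -- k-th root
  have hcr0 : (0:ℝ) ≤ Real.exp 1 * (n:ℝ) / (k:ℝ) := by positivity
  have h4 : ((N:ℝ)/2) ^ ((1:ℝ)/(k:ℝ)) ≤ Real.exp 1 * (n:ℝ) / (k:ℝ) := by
    have h5 := Real.rpow_le_rpow (by positivity) hNc (by positivity : (0:ℝ) ≤ 1/(k:ℝ))
    rwa [← Real.rpow_natCast (Real.exp 1 * (n:ℝ) / (k:ℝ)) k, ← Real.rpow_mul hcr0,
      mul_one_div, div_self (ne_of_gt hk0), Real.rpow_one] at h5
  have hD5 : (k:ℝ) * ((N:ℝ)/2) ^ ((1:ℝ)/(k:ℝ)) ≤ Real.exp 1 * ((D:ℝ) + (k:ℝ) - 1) := by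
    have h6 := mul_le_mul_of_nonneg_left h4 (le_of_lt hk0)
    have h7 : (k:ℝ) * (Real.exp 1 * (n:ℝ) / (k:ℝ)) = Real.exp 1 * (n:ℝ) := by
      field_simp
    rw [h7, hn] at h6
    exact h6
  -- target shape
  have hP : x ≤ x ^ (2*r/(r+1)) := by
    nth_rewrite 1 [← Real.rpow_one x]
    apply Real.rpow_le_rpow_of_exponent_le hx1.le
    rw [le_div_iff₀ (by linarith : (0:ℝ) < r+1)]
    linarith
  have hPN : x ^ (2*r/(r+1)) = ((N:ℝ)) ^ ((1:ℝ)/(r+1)) := by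
    rw [← hxN, ← Real.rpow_mul (le_of_lt hx0), mul_one_div]
  have hP100 : (100:ℝ) ≤ x ^ (2*r/(r+1)) := le_trans hx100 hP
  have hePos := Real.exp_pos 1
  have heLt : Real.exp 1 ≤ 2.7182818286 := Real.exp_one_lt_d9.le
  have hD0 : (0:ℝ) ≤ (D:ℝ) := by positivity
  -- final case analysis
  by_cases hkone : k = 1
  · -- r = 1
    have hre : r = 1 := by
      have h8 : r ≤ 1 := by
        rw [hkone] at hrk
        exact_mod_cast hrk
      linarith
    rw [hre]
    norm_num
    -- from hD5 with k = 1 : 1 * (N/2)^1 ≤ e * D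
    rw [hkone] at hD5
    norm_num [Real.rpow_one] at hD5
    have hxN2 : x ^ (2:ℕ) = (N:ℝ) := by
      rw [← hxN, hre, ← Real.rpow_natCast x 2]
      norm_num
    have h9 : Real.exp 1 * (D:ℝ) ≤ 2.7182818286 * (D:ℝ) :=
      mul_le_mul_of_nonneg_right heLt hD0
    have h10 : 100 * x ≤ x ^ (2:ℕ) := by
      have h := mul_le_mul_of_nonneg_right hx100 hx0.le
      calc 100 * x ≤ x * x := h
        _ = x ^ (2:ℕ) := (sq x).symm
    rw [hxN2] at h10
    linarith
  · -- k ≥ 2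
    have hk2 : 2 ≤ k := by omega
    have hk2' : (2:ℝ) ≤ (k:ℝ) := by exact_mod_cast hk2
    -- (N/2)^(1/k) ≥ P / sqrt 2
    have hsplit : ((N:ℝ)/2) ^ ((1:ℝ)/(k:ℝ)) =
        (N:ℝ) ^ ((1:ℝ)/(k:ℝ)) / (2:ℝ) ^ ((1:ℝ)/(k:ℝ)) :=
      Real.div_rpow (by positivity : (0:ℝ) ≤ (N:ℝ)) (by norm_num : (0:ℝ) ≤ 2) _
    have h2k : (2:ℝ) ^ ((1:ℝ)/(k:ℝ)) ≤ Real.sqrt 2 := by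
      rw [Real.sqrt_eq_rpow]
      apply Real.rpow_le_rpow_of_exponent_le (by norm_num)
      rw [div_le_div_iff₀ hk0 (by norm_num)]
      linarith
    have h2kpos : (0:ℝ) < (2:ℝ) ^ ((1:ℝ)/(k:ℝ)) := by positivity
    have hNk : (N:ℝ) ^ ((1:ℝ)/(r+1)) ≤ (N:ℝ) ^ ((1:ℝ)/(k:ℝ)) := by
      apply Real.rpow_le_rpow_of_exponent_le hN1
      rw [div_le_div_iff₀ (by linarith) hk0]
      linarith
    have hPle : x ^ (2*r/(r+1)) / Real.sqrt 2 ≤ ((N:ℝ)/2) ^ ((1:ℝ)/(k:ℝ)) := by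
      rw [hsplit, hPN]
      exact div_le_div₀ (by positivity) hNk h2kpos h2k
    have hmainA : (k:ℝ) * (x ^ (2*r/(r+1)) / Real.sqrt 2) ≤ Real.exp 1 * ((D:ℝ) + (k:ℝ) - 1) :=
      le_trans (mul_le_mul_of_nonneg_left hPle (le_of_lt hk0)) hD5
    have hs0 : (0:ℝ) < Real.sqrt 2 := Real.sqrt_pos.mpr (by norm_num)
    have hs142 : Real.sqrt 2 ≤ 1.41422 := by
      rw [show (1.41422:ℝ) = Real.sqrt (1.41422^2) from (Real.sqrt_sq (by norm_num)).symm]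
      apply Real.sqrt_le_sqrt
      norm_num
    exact final_arith (Real.exp 1) (Real.sqrt 2) (x ^ (2*r/(r+1))) r (k:ℝ) (D:ℝ)
      hePos heLt hs0 hs142 hP100 hr1 hrk hkr hD0 hmainA
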